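/- Let A be a ring with a non-zerodivisor π such that π^p divides p. Then A is p-closed in A[1/π] if and only if the Frobenius map A/π → A/π^p, x ↦ x^p, is injective. -/

import Mathlib

/-- **`p`-closedness is injectivity of Frobenius `A/π → A/π^p`.**
Let `π ∈ A` be a non-zerodivisor with `π^p ∣ p`.  Then `A` is `p`-closed in `A[1/π]`
(i.e. `x ∈ A[1/π]` and `x^p ∈ A` imply `x ∈ A`) if and only if the Frobenius
`A/π → A/π^p`, `x ↦ x^p`, is injective (i.e. `x^p ≡ y^p mod π^p` implies
`x ≡ y mod π`). -/
theorem statement11 (p : ℕ) [Fact p.Prime] {A : Type} [CommRing A] (π : A)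
    (hπ : ∀ a : A, π * a = 0 → a = 0) (hdvd : π ^ p ∣ (p : A)) :
    (∀ x : Localization.Away π,
        x ^ p ∈ (algebraMap A (Localization.Away π)).range →
        x ∈ (algebraMap A (Localization.Away π)).range) ↔
      (∀ x y : A, x ^ p - y ^ p ∈ Ideal.span {π ^ p} → x - y ∈ Ideal.span {π}) := by
  have hp := (Fact.out : p.Prime)
  have hreg : Submonoid.powers π ≤ nonZeroDivisors A := by
    rintro s ⟨n, rfl⟩
    refine pow_mem ?_ n
    rw [mem_nonZeroDivisors_iff_right]
    intro a ha
    exact hπ a (by rw [mul_comm]; exact ha)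
  have hinj : Function.Injective (algebraMap A (Localization.Away π)) :=
    IsLocalization.injective _ hreg
  have hπunit : IsUnit (algebraMap A (Localization.Away π) π) :=
    IsLocalization.map_units _ (⟨π, 1, pow_one π⟩ : Submonoid.powers π)
  constructor
  · intro H x y hxy
    rw [Ideal.mem_span_singleton] at hxy ⊢
    obtain ⟨a, ha⟩ := hxy
    -- (x - y)^p divisible by π^p
    obtain ⟨r, hr⟩ := exists_add_pow_prime_eq hp (x - y) y
    rw [sub_add_cancel] at hr
    have hdvd2 : π ^ p ∣ (x - y) ^ p := by
      have : (x - y) ^ p = (x ^ p - y ^ p) - p * ((x - y) * y * r) := by linear_combination -hr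
      rw [this]
      exact dvd_sub ⟨a, ha⟩ (Dvd.dvd.mul_right hdvd _)
    obtain ⟨b, hb⟩ := hdvd2
    have hπunit' := hπunit
    obtain ⟨u, hu⟩ := hπunit'
    set z : Localization.Away π := ↑u⁻¹ * algebraMap A (Localization.Away π) (x - y) with hz
    have hzpow : z ^ p ∈ (algebraMap A (Localization.Away π)).range := by
      refine ⟨b, ?_⟩
      have : (algebraMap A (Localization.Away π) π) ^ p * algebraMap A (Localization.Away π) b
          = (algebraMap A (Localization.Away π) π) ^ p * z ^ p := by
        rw [hz, mul_pow, ← mul_assoc]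
        have : (algebraMap A (Localization.Away π) π) ^ p * (↑u⁻¹ : Localization.Away π) ^ p
            = 1 := by
          rw [← hu, ← mul_pow, Units.mul_inv, one_pow]
        rw [this, one_mul, ← map_pow, ← map_pow, ← map_mul, hb]
      have hu2 : IsUnit ((algebraMap A (Localization.Away π) π) ^ p) := IsUnit.pow p hπunit
      exact hu2.mul_left_cancel this
    obtain ⟨c, hc⟩ := H z hzpow
    refine ⟨c, ?_⟩
    apply hinj
    rw [map_mul]
    rw [hc, hz, ← hu, ← mul_assoc, Units.mul_inv, one_mul]
  · intro H x hx
    have key : ∀ (n : ℕ) (z : Localization.Away π) (a : A),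
        z ^ p ∈ (algebraMap A (Localization.Away π)).range →
        z * algebraMap A (Localization.Away π) (π ^ n) = algebraMap A (Localization.Away π) a →
        z ∈ (algebraMap A (Localization.Away π)).range := by
      intro n
      induction n with
      | zero =>
          intro z a _ heq
          rw [pow_zero, map_one, mul_one] at heq
          exact ⟨a, heq.symm⟩
      | succ n ih =>
          intro z a hmem heq
          obtain ⟨b, hb⟩ := hmem
          have key2 : a ^ p = b * π ^ ((n + 1) * p) := by
            apply hinj
            have h3 : algebraMap A (Localization.Away π) (a ^ p)
                = z ^ p * (algebraMap A (Localization.Away π)) (π ^ ((n+1)*p)) := by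
              rw [map_pow, ← heq, mul_pow, ← map_pow, ← pow_mul]
            rw [h3, ← hb, ← map_mul]
          have hmem2 : a ^ p - 0 ^ p ∈ Ideal.span {π ^ p} := by
            rw [zero_pow hp.ne_zero, sub_zero, Ideal.mem_span_singleton, key2]
            exact Dvd.dvd.mul_left (pow_dvd_pow π (Nat.le_mul_of_pos_left p n.succ_pos)) b
          have h4 := H a 0 hmem2
          rw [sub_zero, Ideal.mem_span_singleton] at h4
          obtain ⟨c, hc⟩ := h4
          refine ih z c ⟨b, hb⟩ ?_
          have h2 : algebraMap A (Localization.Away π) π *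
              (z * algebraMap A (Localization.Away π) (π ^ n))
              = algebraMap A (Localization.Away π) π * algebraMap A (Localization.Away π) c := by
            calc algebraMap A (Localization.Away π) π * (z * algebraMap A (Localization.Away π) (π ^ n))
                = z * algebraMap A (Localization.Away π) (π ^ (n+1)) := by
                  rw [pow_succ', map_mul]; ring
              _ = algebraMap A (Localization.Away π) a := heq
              _ = _ := by rw [hc, map_mul]
          exact hπunit.mul_left_cancel h2
    obtain ⟨⟨a, s⟩, hs⟩ := IsLocalization.surj (Submonoid.powers π) x
    obtain ⟨n, hn⟩ := s.2
    refine key n x a hx ?_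
    dsimp only at hs
    rw [show π ^ n = (s : A) from hn, hs]
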